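/- arXiv:2109.09709 — 3 statements merged into one kernel-verified Lean document; each statement's English description precedes it below -/
import Mathlib

section
/- Conditional KL bounds: for jointly distributed X ∈ S_X, Y ∈ S_Y, log(1/π_X(S_X)) ≤ D((X,Y)‖π_X×π_Y) − D(Y‖π_Y) ≤ log(1/inf_s π_X(s)). -/
open scoped ENNReal

/-- The Kullback-Leibler divergence `D(μ‖π)` of a (sub)probability mass function `μ` relative to
a reference measure `π` on a countable set, valued in the extended reals.  The conventions
`0·log(0/·) = 0` and `μ s > π s = 0 ⇒ D = +∞` are built in; the sum is split into its positive
and negative parts so that divergence to `±∞` is handled correctly. -/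
noncomputable def klDiv {S : Type*} (μ : S → ℝ≥0∞) (π : S → ℝ≥0∞) : EReal :=
  ((∑' s, if π s = 0 ∧ μ s ≠ 0 then (⊤ : ℝ≥0∞)
      else ENNReal.ofReal ((μ s).toReal * Real.log ((μ s).toReal / (π s).toReal)) : ℝ≥0∞) : EReal)
  - ((∑' s, ENNReal.ofReal (-((μ s).toReal * Real.log ((μ s).toReal / (π s).toReal))) : ℝ≥0∞) : EReal)

/-- The conditional distribution of `X` given `Y = y`, for a joint pmf `p` on `S_X × S_Y`. -/
noncomputable def condDist {SX SY : Type*} (p : PMF (SX × SY)) (y : SY) : SX → ℝ≥0∞ :=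
  fun x => p (x, y) / (p.map Prod.snd) y

/-- `E_y [D(X|Y=y ‖ πX)]`: the expectation, over the marginal distribution of `Y`,
of the KL divergence of the conditional distribution of `X` given `Y = y` relative to `πX`. -/
noncomputable def condKL {SX SY : Type*} (p : PMF (SX × SY)) (πX : SX → ℝ≥0∞) : EReal :=
  ∑' y, (((p.map Prod.snd) y : ℝ≥0∞) : EReal) * klDiv (condDist p y) πX

/-- The mutual information `I(X;Y) = D(P_{(X,Y)} ‖ P_X × P_Y)` of a joint pmf `p`. -/
noncomputable def mutualInfo {SX SY : Type*} (p : PMF (SX × SY)) : EReal :=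
  klDiv (⇑p) (fun z => (p.map Prod.fst) z.1 * (p.map Prod.snd) z.2)

namespace KLAux

noncomputable def fkl {S : Type*} (μ π : S → ℝ≥0∞) (s : S) : ℝ :=
  (μ s).toReal * Real.log ((μ s).toReal / (π s).toReal)

lemma klDiv_eq {S : Type*} (μ π : S → ℝ≥0∞) :
    klDiv μ π = ((∑' s, if π s = 0 ∧ μ s ≠ 0 then (⊤ : ℝ≥0∞)
        else ENNReal.ofReal (fkl μ π s) : ℝ≥0∞) : EReal)
      - ((∑' s, ENNReal.ofReal (-(fkl μ π s)) : ℝ≥0∞) : EReal) := rfl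

lemma toReal_ofReal_sub (x : ℝ) :
    (ENNReal.ofReal x).toReal - (ENNReal.ofReal (-x)).toReal = x := by
  rcases le_total 0 x with h | h
  · simp [ENNReal.toReal_ofReal h, ENNReal.ofReal_of_nonpos (neg_nonpos.mpr h)]
  · simp [ENNReal.ofReal_of_nonpos h, ENNReal.toReal_ofReal (neg_nonneg.mpr h)]

lemma bridge_summable {α : Type*} (w : α → ℝ)
    (hP : (∑' a, ENNReal.ofReal (w a)) ≠ ⊤) (hN : (∑' a, ENNReal.ofReal (-(w a))) ≠ ⊤) :
    Summable w := by
  have h1 := ENNReal.summable_toReal hP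
  have h2 := ENNReal.summable_toReal hN
  exact (h1.sub h2).congr fun a => toReal_ofReal_sub (w a)

lemma coe_ennreal_fin (x : ℝ≥0∞) (hx : x ≠ ⊤) : (x : EReal) = ((x.toReal : ℝ) : EReal) := by
  rw [← EReal.toReal_coe_ennreal (x := x)]
  exact (EReal.coe_toReal (fun h => hx (EReal.coe_ennreal_eq_top_iff.mp h))
    (EReal.coe_ennreal_ne_bot x)).symm

lemma bridge_eq {α : Type*} (w : α → ℝ)
    (hP : (∑' a, ENNReal.ofReal (w a)) ≠ ⊤) (hN : (∑' a, ENNReal.ofReal (-(w a))) ≠ ⊤) :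
    ((∑' a, ENNReal.ofReal (w a) : ℝ≥0∞) : EReal)
      - ((∑' a, ENNReal.ofReal (-(w a)) : ℝ≥0∞) : EReal) = ((∑' a, w a : ℝ) : EReal) := by
  have h1 := ENNReal.summable_toReal hP
  have h2 := ENNReal.summable_toReal hN
  have key : (∑' a, w a : ℝ)
      = (∑' a, ENNReal.ofReal (w a)).toReal - (∑' a, ENNReal.ofReal (-(w a))).toReal := by
    rw [ENNReal.tsum_toReal_eq (fun a => ENNReal.ofReal_ne_top),
      ENNReal.tsum_toReal_eq (fun a => ENNReal.ofReal_ne_top), ← Summable.tsum_sub h1 h2]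
    exact tsum_congr fun a => (toReal_ofReal_sub (w a)).symm
  rw [key, EReal.coe_sub, ← coe_ennreal_fin _ hP, ← coe_ennreal_fin _ hN]

lemma bridge_tsum {α : Type*} (w : α → ℝ)
    (hP : (∑' a, ENNReal.ofReal (w a)) ≠ ⊤) (hN : (∑' a, ENNReal.ofReal (-(w a))) ≠ ⊤) :
    (∑' a, w a : ℝ)
      = (∑' a, ENNReal.ofReal (w a)).toReal - (∑' a, ENNReal.ofReal (-(w a))).toReal := by
  have h1 := ENNReal.summable_toReal hP
  have h2 := ENNReal.summable_toReal hN
  rw [ENNReal.tsum_toReal_eq (fun a => ENNReal.ofReal_ne_top),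
    ENNReal.tsum_toReal_eq (fun a => ENNReal.ofReal_ne_top), ← Summable.tsum_sub h1 h2]
  exact tsum_congr fun a => (toReal_ofReal_sub (w a)).symm

lemma klDiv_le_tsum {S : Type*} (μ π : S → ℝ≥0∞) (w : S → ℝ)
    (htop : ∀ s, π s = 0 → μ s = 0)
    (hle : ∀ s, fkl μ π s ≤ w s)
    (hP : (∑' s, ENNReal.ofReal (w s)) ≠ ⊤) (hN : (∑' s, ENNReal.ofReal (-(w s))) ≠ ⊤) :
    klDiv μ π ≤ ((∑' s, w s : ℝ) : EReal) := by
  rw [← bridge_eq w hP hN, klDiv_eq]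
  refine EReal.sub_le_sub ?_ ?_
  · refine EReal.coe_ennreal_le_coe_ennreal_iff.mpr (ENNReal.tsum_le_tsum fun s => ?_)
    rw [if_neg (fun hc => hc.2 (htop s hc.1))]
    exact ENNReal.ofReal_le_ofReal (hle s)
  · exact EReal.coe_ennreal_le_coe_ennreal_iff.mpr
      (ENNReal.tsum_le_tsum fun s => ENNReal.ofReal_le_ofReal (neg_le_neg (hle s)))

lemma ereal_helper {a b c d : ℝ≥0∞} (ha : a ≠ ⊤) (hb : b ≠ ⊤) (hd : d ≠ ⊤)
    (h : a + d ≤ c + b) : (a : EReal) - b ≤ (c : EReal) - d := by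
  by_cases hc : c = ⊤
  · rw [hc, EReal.coe_ennreal_top, coe_ennreal_fin _ hd, EReal.top_sub_coe]
    exact le_top
  · have h' : a.toReal + d.toReal ≤ c.toReal + b.toReal := by
      rw [← ENNReal.toReal_add ha hd, ← ENNReal.toReal_add hc hb]
      exact ENNReal.toReal_mono (ENNReal.add_ne_top.mpr ⟨hc, hb⟩) h
    rw [coe_ennreal_fin _ ha, coe_ennreal_fin _ hb, coe_ennreal_fin _ hc, coe_ennreal_fin _ hd,
      ← EReal.coe_sub, ← EReal.coe_sub, EReal.coe_le_coe_iff]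
    linarith

lemma tsum_le_klDiv {S : Type*} (μ π : S → ℝ≥0∞) (w : S → ℝ)
    (hle : ∀ s, ¬(π s = 0 ∧ μ s ≠ 0) → w s ≤ fkl μ π s)
    (hNf : (∑' s, ENNReal.ofReal (-(fkl μ π s))) ≠ ⊤)
    (hP : (∑' s, ENNReal.ofReal (w s)) ≠ ⊤) (hN : (∑' s, ENNReal.ofReal (-(w s))) ≠ ⊤) :
    ((∑' s, w s : ℝ) : EReal) ≤ klDiv μ π := by
  rw [← bridge_eq w hP hN, klDiv_eq]
  refine ereal_helper hP hN hNf ?_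
  rw [← ENNReal.tsum_add, ← ENNReal.tsum_add]
  refine ENNReal.tsum_le_tsum fun s => ?_
  by_cases hc : π s = 0 ∧ μ s ≠ 0
  · rw [if_pos hc]; simp
  · rw [if_neg hc]
    exact add_le_add (ENNReal.ofReal_le_ofReal (hle s hc))
      (ENNReal.ofReal_le_ofReal (neg_le_neg (hle s hc)))

lemma ofReal_toReal_mul (a : ℝ≥0∞) (ha : a ≠ ⊤) (r : ℝ) :
    ENNReal.ofReal (a.toReal * r) = a * ENNReal.ofReal r := by
  rw [ENNReal.ofReal_mul ENNReal.toReal_nonneg, ENNReal.ofReal_toReal ha]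

lemma gibbs_key {A Q : ℝ} (hA : 0 < A) (hQ : 0 < Q) : A - Q ≤ A * Real.log (A / Q) := by
  have h := Real.log_le_sub_one_of_pos (div_pos hQ hA)
  have hlog : Real.log (Q / A) = -Real.log (A / Q) := by
    rw [Real.log_div hQ.ne' hA.ne', Real.log_div hA.ne' hQ.ne']; ring
  rw [hlog] at h
  have h2 := mul_le_mul_of_nonneg_left h hA.le
  have hAQ : A * (Q / A - 1) = Q - A := by field_simp
  nlinarith

end KLAux

open KLAux

/-- Conditional KL bounds: for jointly distributed `X ∈ S_X`, `Y ∈ S_Y` (joint distribution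
`p`), `log(1/πX(S_X)) ≤ D((X,Y) ‖ πX×πY) − D(Y ‖ πY) ≤ log(1/inf_x πX(x))`.
The hypotheses on `D(Y‖πY)` rule out conflicting infinities in the subtraction. -/
theorem kl_cond_bounds {SX SY : Type*} [Countable SX] [Countable SY]
    (p : PMF (SX × SY)) (πX : SX → ℝ≥0∞) (πY : SY → ℝ≥0∞)
    (hπXfin : ∀ x, πX x ≠ ⊤) (hπXne : ∃ x, πX x ≠ 0)
    (hπYfin : ∀ y, πY y ≠ ⊤) (hπYne : ∃ y, πY y ≠ 0)
    (hY_bot : klDiv (⇑(p.map Prod.snd)) πY ≠ ⊥) (hY_top : klDiv (⇑(p.map Prod.snd)) πY ≠ ⊤) :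
    - ENNReal.log (∑' x, πX x)
        ≤ klDiv (⇑p) (fun z => πX z.1 * πY z.2) - klDiv (⇑(p.map Prod.snd)) πY
    ∧ klDiv (⇑p) (fun z => πX z.1 * πY z.2) - klDiv (⇑(p.map Prod.snd)) πY
        ≤ - ENNReal.log (⨅ x, πX x) := by
  classical
  obtain ⟨x₀, hx₀⟩ := hπXne
  set G : SY → ℝ := fun y => Real.log (((p.map Prod.snd) y).toReal / (πY y).toReal) with hG
  have hfklB : ∀ y, fkl (⇑(p.map Prod.snd)) πY y = ((p.map Prod.snd) y).toReal * G y :=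
    fun y => rfl
  have marg : ∀ y, (p.map Prod.snd) y = ∑' x, p (x, y) := fun y => by
    rw [PMF.map_apply, ENNReal.tsum_prod']
    refine tsum_congr fun x => ?_
    rw [tsum_eq_single y (fun b hb => if_neg fun h => hb h.symm), if_pos rfl]
  have hpfin : ∀ z, p z ≠ ⊤ := fun z => PMF.apply_ne_top p z
  have hpYfin : ∀ y, (p.map Prod.snd) y ≠ ⊤ := fun y => PMF.apply_ne_top _ y
  have ple : ∀ z : SX × SY, p z ≤ (p.map Prod.snd) z.2 := fun z => by
    obtain ⟨x, y⟩ := z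
    rw [marg y]
    exact ENNReal.le_tsum x
  have massp : ∑' z, p z = 1 := p.tsum_coe
  have masspY : ∑' y, (p.map Prod.snd) y = 1 := (p.map Prod.snd).tsum_coe
  -- facts about B := klDiv pY πY
  have hNB : (∑' y, ENNReal.ofReal (-(fkl (⇑(p.map Prod.snd)) πY y))) ≠ ⊤ := by
    intro h
    apply hY_bot
    rw [klDiv_eq, h, EReal.coe_ennreal_top, sub_eq_add_neg, EReal.neg_top, EReal.add_bot]
  have hPBif : (∑' y, if πY y = 0 ∧ (⇑(p.map Prod.snd)) y ≠ 0 then (⊤ : ℝ≥0∞)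
      else ENNReal.ofReal (fkl (⇑(p.map Prod.snd)) πY y)) ≠ ⊤ := by
    intro h
    apply hY_top
    rw [klDiv_eq, h, EReal.coe_ennreal_top, coe_ennreal_fin _ hNB, EReal.top_sub_coe]
  have htopB : ∀ y, πY y = 0 → (p.map Prod.snd) y = 0 := by
    intro y h0
    by_contra hne
    refine hPBif (eq_top_iff.mpr ?_)
    calc (⊤ : ℝ≥0∞) = if πY y = 0 ∧ (⇑(p.map Prod.snd)) y ≠ 0 then (⊤ : ℝ≥0∞)
        else ENNReal.ofReal (fkl (⇑(p.map Prod.snd)) πY y) := (if_pos ⟨h0, hne⟩).symm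
      _ ≤ _ := ENNReal.le_tsum y
  have hPBeq : (∑' y, if πY y = 0 ∧ (⇑(p.map Prod.snd)) y ≠ 0 then (⊤ : ℝ≥0∞)
      else ENNReal.ofReal (fkl (⇑(p.map Prod.snd)) πY y))
      = ∑' y, ENNReal.ofReal (fkl (⇑(p.map Prod.snd)) πY y) :=
    tsum_congr fun y => if_neg (fun hc => hc.2 (htopB y hc.1))
  have hPB : (∑' y, ENNReal.ofReal (fkl (⇑(p.map Prod.snd)) πY y)) ≠ ⊤ := by
    rw [← hPBeq]; exact hPBif
  have hBr : klDiv (⇑(p.map Prod.snd)) πY = ((∑' y, fkl (⇑(p.map Prod.snd)) πY y : ℝ) : EReal) := by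
    rw [klDiv_eq, hPBeq, bridge_eq _ hPB hNB]
  have hsumB : Summable (fkl (⇑(p.map Prod.snd)) πY) := bridge_summable _ hPB hNB
  -- Fubini helper
  have Fub : ∀ Gf : SY → ℝ≥0∞, (∑' z : SX × SY, p z * Gf z.2) = ∑' y, (p.map Prod.snd) y * Gf y := by
    intro Gf
    rw [ENNReal.tsum_prod', ENNReal.tsum_comm (f := fun x y => p (x, y) * Gf y)]
    exact tsum_congr fun y => by rw [ENNReal.tsum_mul_right, ← marg y]
  have hPBalt : ∀ r : SY → ℝ, (∑' y, (p.map Prod.snd) y * ENNReal.ofReal (r y))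
      = ∑' y, ENNReal.ofReal (((p.map Prod.snd) y).toReal * r y) :=
    fun r => tsum_congr fun y => (ofReal_toReal_mul _ (hpYfin y) _).symm
  -- positive / negative parts of the z-level sums equal the y-level sums
  have hZY : ∀ d : ℝ, (∑' z : SX × SY, ENNReal.ofReal ((p z).toReal * (G z.2 + d)))
      = ∑' y, ENNReal.ofReal (((p.map Prod.snd) y).toReal * (G y + d)) := by
    intro d
    rw [← hPBalt, ← Fub (fun y => ENNReal.ofReal (G y + d))]
    exact tsum_congr fun z => ofReal_toReal_mul _ (hpfin z) _
  have hZYn : ∀ d : ℝ, (∑' z : SX × SY, ENNReal.ofReal (-((p z).toReal * (G z.2 + d))))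
      = ∑' y, ENNReal.ofReal (-(((p.map Prod.snd) y).toReal * (G y + d))) := by
    intro d
    have e1 : ∀ z : SX × SY, -((p z).toReal * (G z.2 + d)) = (p z).toReal * (-(G z.2 + d)) :=
      fun z => by ring
    have e2 : ∀ y, -(((p.map Prod.snd) y).toReal * (G y + d))
        = ((p.map Prod.snd) y).toReal * (-(G y + d)) := fun y => by ring
    calc (∑' z : SX × SY, ENNReal.ofReal (-((p z).toReal * (G z.2 + d))))
        = ∑' z : SX × SY, p z * ENNReal.ofReal (-(G z.2 + d)) :=
          tsum_congr fun z => by rw [e1 z, ofReal_toReal_mul _ (hpfin z)]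
      _ = ∑' y, (p.map Prod.snd) y * ENNReal.ofReal (-(G y + d)) :=
          Fub (fun y => ENNReal.ofReal (-(G y + d)))
      _ = ∑' y, ENNReal.ofReal (-(((p.map Prod.snd) y).toReal * (G y + d))) :=
          tsum_congr fun y => by rw [e2 y, ofReal_toReal_mul _ (hpYfin y)]
  -- finiteness of the weighted shifted sums
  have hPWy : ∀ d : ℝ, (∑' y, ENNReal.ofReal (((p.map Prod.snd) y).toReal * (G y + d))) ≠ ⊤ := by
    intro d
    refine ne_top_of_le_ne_top (b := (∑' y, (ENNReal.ofReal (((p.map Prod.snd) y).toReal * G y)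
        + (p.map Prod.snd) y * ENNReal.ofReal d))) ?_ (ENNReal.tsum_le_tsum fun y => ?_)
    · rw [ENNReal.tsum_add, ENNReal.tsum_mul_right, masspY, one_mul]
      exact ENNReal.add_ne_top.mpr ⟨by
        have : (∑' y, ENNReal.ofReal (((p.map Prod.snd) y).toReal * G y))
            = ∑' y, ENNReal.ofReal (fkl (⇑(p.map Prod.snd)) πY y) :=
          tsum_congr fun y => by rw [hfklB y]
        rw [this]; exact hPB, ENNReal.ofReal_ne_top⟩
    · rw [mul_add]
      calc ENNReal.ofReal (((p.map Prod.snd) y).toReal * G y + ((p.map Prod.snd) y).toReal * d)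
          ≤ ENNReal.ofReal (((p.map Prod.snd) y).toReal * G y)
            + ENNReal.ofReal (((p.map Prod.snd) y).toReal * d) := ENNReal.ofReal_add_le
        _ = _ := by rw [ofReal_toReal_mul _ (hpYfin y) d]
  have hNWy : ∀ d : ℝ, (∑' y, ENNReal.ofReal (-(((p.map Prod.snd) y).toReal * (G y + d)))) ≠ ⊤ := by
    intro d
    refine ne_top_of_le_ne_top (b := (∑' y, (ENNReal.ofReal (-(((p.map Prod.snd) y).toReal * G y))
        + (p.map Prod.snd) y * ENNReal.ofReal (-d)))) ?_ (ENNReal.tsum_le_tsum fun y => ?_)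
    · rw [ENNReal.tsum_add, ENNReal.tsum_mul_right, masspY, one_mul]
      exact ENNReal.add_ne_top.mpr ⟨by
        have : (∑' y, ENNReal.ofReal (-(((p.map Prod.snd) y).toReal * G y)))
            = ∑' y, ENNReal.ofReal (-(fkl (⇑(p.map Prod.snd)) πY y)) :=
          tsum_congr fun y => by rw [hfklB y]
        rw [this]; exact hNB, ENNReal.ofReal_ne_top⟩
    · have e3 : -(((p.map Prod.snd) y).toReal * (G y + d))
          = -(((p.map Prod.snd) y).toReal * G y) + ((p.map Prod.snd) y).toReal * (-d) := by ring
      rw [e3]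
      calc ENNReal.ofReal (-(((p.map Prod.snd) y).toReal * G y) + ((p.map Prod.snd) y).toReal * (-d))
          ≤ ENNReal.ofReal (-(((p.map Prod.snd) y).toReal * G y))
            + ENNReal.ofReal (((p.map Prod.snd) y).toReal * (-d)) := ENNReal.ofReal_add_le
        _ = _ := by rw [ofReal_toReal_mul _ (hpYfin y) (-d)]
  have hPW : ∀ d : ℝ, (∑' z : SX × SY, ENNReal.ofReal ((p z).toReal * (G z.2 + d))) ≠ ⊤ :=
    fun d => by rw [hZY d]; exact hPWy d
  have hNW : ∀ d : ℝ, (∑' z : SX × SY, ENNReal.ofReal (-((p z).toReal * (G z.2 + d)))) ≠ ⊤ :=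
    fun d => by rw [hZYn d]; exact hNWy d
  -- the sum of the shifted weighted function
  have hsumpYr : Summable (fun y => ((p.map Prod.snd) y).toReal) :=
    ENNReal.summable_toReal (by rw [masspY]; exact ENNReal.one_ne_top)
  have sumpYr : (∑' y, ((p.map Prod.snd) y).toReal) = 1 := by
    rw [← ENNReal.tsum_toReal_eq hpYfin, masspY, ENNReal.toReal_one]
  have hSW : ∀ d : ℝ, (∑' z : SX × SY, (p z).toReal * (G z.2 + d))
      = (∑' y, fkl (⇑(p.map Prod.snd)) πY y) + d := by
    intro d
    rw [bridge_tsum _ (hPW d) (hNW d), hZY d, hZYn d,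
      ← bridge_tsum (fun y => ((p.map Prod.snd) y).toReal * (G y + d)) (hPWy d) (hNWy d)]
    have e4 : ∀ y, ((p.map Prod.snd) y).toReal * (G y + d)
        = fkl (⇑(p.map Prod.snd)) πY y + ((p.map Prod.snd) y).toReal * d := fun y => by
      rw [hfklB y]; ring
    rw [tsum_congr e4, Summable.tsum_add hsumB (hsumpYr.mul_right d), tsum_mul_right, sumpYr, one_mul]
  constructor
  · -- lower bound
    by_cases hs : (∑' x, πX x) = ⊤
    · rw [hs, ENNReal.log_top, EReal.neg_top]; exact bot_le
    · have hs0 : (∑' x, πX x) ≠ 0 := fun h =>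
        hx₀ (le_antisymm (le_trans (ENNReal.le_tsum x₀) (le_of_eq h)) zero_le)
      have hsr : 0 < (∑' x, πX x).toReal := ENNReal.toReal_pos hs0 hs
      have hqsum : (∑' z : SX × SY, πX z.1 * (p.map Prod.snd) z.2) = ∑' x, πX x := by
        rw [ENNReal.tsum_prod']
        refine tsum_congr fun x => ?_
        have hb : ∀ b, πX (x, b).1 * (p.map Prod.snd) (x, b).2 = πX x * (p.map Prod.snd) b :=
          fun b => rfl
        rw [tsum_congr hb, ENNReal.tsum_mul_left, masspY, mul_one]
      have hqfin : ∀ z : SX × SY, πX z.1 * (p.map Prod.snd) z.2 ≠ ⊤ :=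
        fun z => ENNReal.mul_ne_top (hπXfin _) (hpYfin _)
      have hNf : (∑' z : SX × SY,
          ENNReal.ofReal (-(fkl (⇑p) (fun z : SX × SY => πX z.1 * πY z.2) z))) ≠ ⊤ := by
        refine ne_top_of_le_ne_top (b := (∑' z : SX × SY,
          (p z * ENNReal.ofReal (-(G z.2)) + πX z.1 * (p.map Prod.snd) z.2)))
          ?_ (ENNReal.tsum_le_tsum fun z => ?_)
        · rw [ENNReal.tsum_add, Fub (fun y => ENNReal.ofReal (-(G y))), hqsum]
          have heq : (∑' y, (p.map Prod.snd) y * ENNReal.ofReal (-(G y)))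
              = ∑' y, ENNReal.ofReal (-(fkl (⇑(p.map Prod.snd)) πY y)) := by
            rw [hPBalt]
            exact tsum_congr fun y => by rw [hfklB y, neg_mul_eq_mul_neg]
          rw [heq]
          exact ENNReal.add_ne_top.mpr ⟨hNB, hs⟩
        · by_cases hz : p z = 0
          · simp [fkl, hz]
          · have ha : 0 < (p z).toReal := ENNReal.toReal_pos hz (hpfin z)
            have hpYz : (p.map Prod.snd) z.2 ≠ 0 := fun h =>
              hz (le_antisymm (le_trans (ple z) (le_of_eq h)) zero_le)
            have hb : 0 < ((p.map Prod.snd) z.2).toReal := ENNReal.toReal_pos hpYz (hpYfin _)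
            have hπYz : πY z.2 ≠ 0 := fun h => hpYz (htopB _ h)
            have ht : 0 < (πY z.2).toReal := ENNReal.toReal_pos hπYz (hπYfin _)
            by_cases hπXz : πX z.1 = 0
            · have hfz : fkl (⇑p) (fun z : SX × SY => πX z.1 * πY z.2) z = 0 := by
                simp [fkl, hπXz]
              rw [hfz]; simp
            · have hu0 : 0 < (πX z.1).toReal := ENNReal.toReal_pos hπXz (hπXfin _)
              have hGz : G z.2 = Real.log (((p.map Prod.snd) z.2).toReal / (πY z.2).toReal) := rfl
              have hkey2 : -(fkl (⇑p) (fun z : SX × SY => πX z.1 * πY z.2) z)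
                  ≤ (p z).toReal * Real.log ((πY z.2).toReal / ((p.map Prod.snd) z.2).toReal)
                    + (πX z.1).toReal * ((p.map Prod.snd) z.2).toReal := by
                have hfz : fkl (⇑p) (fun z : SX × SY => πX z.1 * πY z.2) z
                    = (p z).toReal * Real.log ((p z).toReal
                      / ((πX z.1).toReal * (πY z.2).toReal)) := by
                  show (p z).toReal * Real.log ((p z).toReal / (πX z.1 * πY z.2).toReal) = _
                  rw [ENNReal.toReal_mul]
                have hgibbs := gibbs_key ha (mul_pos hu0 hb)
                have l1 : Real.log ((p z).toReal / ((πX z.1).toReal * (πY z.2).toReal))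
                    = Real.log (p z).toReal
                      - (Real.log (πX z.1).toReal + Real.log (πY z.2).toReal) := by
                  rw [Real.log_div ha.ne' (mul_pos hu0 ht).ne', Real.log_mul hu0.ne' ht.ne']
                have l2 : Real.log ((πY z.2).toReal / ((p.map Prod.snd) z.2).toReal)
                    = Real.log (πY z.2).toReal - Real.log ((p.map Prod.snd) z.2).toReal :=
                  Real.log_div ht.ne' hb.ne'
                have l3 : Real.log ((p z).toReal / ((πX z.1).toReal * ((p.map Prod.snd) z.2).toReal))
                    = Real.log (p z).toReal
                      - (Real.log (πX z.1).toReal + Real.log ((p.map Prod.snd) z.2).toReal) := by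
                  rw [Real.log_div ha.ne' (mul_pos hu0 hb).ne', Real.log_mul hu0.ne' hb.ne']
                rw [hfz, l1, l2]
                rw [l3] at hgibbs
                nlinarith [hgibbs, ha.le]
              calc ENNReal.ofReal (-(fkl (⇑p) (fun z : SX × SY => πX z.1 * πY z.2) z))
                  ≤ ENNReal.ofReal ((p z).toReal
                      * Real.log ((πY z.2).toReal / ((p.map Prod.snd) z.2).toReal)
                    + (πX z.1).toReal * ((p.map Prod.snd) z.2).toReal) :=
                    ENNReal.ofReal_le_ofReal hkey2
                _ ≤ ENNReal.ofReal ((p z).toReal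
                      * Real.log ((πY z.2).toReal / ((p.map Prod.snd) z.2).toReal))
                    + ENNReal.ofReal ((πX z.1).toReal * ((p.map Prod.snd) z.2).toReal) :=
                    ENNReal.ofReal_add_le
                _ = p z * ENNReal.ofReal (-(G z.2)) + πX z.1 * (p.map Prod.snd) z.2 := by
                    have hmg : Real.log ((πY z.2).toReal / ((p.map Prod.snd) z.2).toReal)
                        = -(G z.2) := by
                      rw [hGz, Real.log_div ht.ne' hb.ne', Real.log_div hb.ne' ht.ne']; ring
                    rw [hmg, ofReal_toReal_mul _ (hpfin z), ofReal_toReal_mul _ (hπXfin z.1),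
                      ENNReal.ofReal_toReal (hpYfin z.2)]
      have hsum_pr : Summable (fun z : SX × SY => (p z).toReal) :=
        ENNReal.summable_toReal (by rw [massp]; exact ENNReal.one_ne_top)
      have hsum_qr : Summable (fun z : SX × SY => (πX z.1 * (p.map Prod.snd) z.2).toReal) :=
        ENNReal.summable_toReal (by rw [hqsum]; exact hs)
      have sum_pr : (∑' z : SX × SY, (p z).toReal) = 1 := by
        rw [← ENNReal.tsum_toReal_eq hpfin, massp, ENNReal.toReal_one]
      have sum_qr : (∑' z : SX × SY, (πX z.1 * (p.map Prod.snd) z.2).toReal)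
          = (∑' x, πX x).toReal := by
        rw [← ENNReal.tsum_toReal_eq hqfin, hqsum]
      have hWsum : Summable (fun z : SX × SY =>
          (p z).toReal * (G z.2 + -Real.log (∑' x, πX x).toReal)) :=
        bridge_summable _ (hPW _) (hNW _)
      have hesum : Summable (fun z : SX × SY =>
          (p z).toReal - (πX z.1 * (p.map Prod.snd) z.2).toReal / (∑' x, πX x).toReal) :=
        hsum_pr.sub (hsum_qr.div_const _)
      have hesumeq : (∑' z : SX × SY, ((p z).toReal
          - (πX z.1 * (p.map Prod.snd) z.2).toReal / (∑' x, πX x).toReal)) = 0 := by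
        rw [Summable.tsum_sub hsum_pr (hsum_qr.div_const _), tsum_div_const, sum_pr, sum_qr,
          div_self hsr.ne']
        ring
      have hPWl : (∑' z : SX × SY, ENNReal.ofReal
          ((p z).toReal * (G z.2 + -Real.log (∑' x, πX x).toReal)
            + ((p z).toReal - (πX z.1 * (p.map Prod.snd) z.2).toReal / (∑' x, πX x).toReal)))
          ≠ ⊤ := by
        refine ne_top_of_le_ne_top (b := (∑' z : SX × SY,
          (ENNReal.ofReal ((p z).toReal * (G z.2 + -Real.log (∑' x, πX x).toReal)) + p z)))
          ?_ (ENNReal.tsum_le_tsum fun z => ?_)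
        · rw [ENNReal.tsum_add, massp]
          exact ENNReal.add_ne_top.mpr ⟨hPW _, ENNReal.one_ne_top⟩
        · refine le_trans ENNReal.ofReal_add_le (add_le_add le_rfl ?_)
          refine le_trans (ENNReal.ofReal_le_ofReal (sub_le_self _ (by positivity)))
            (le_of_eq (ENNReal.ofReal_toReal (hpfin z)))
      have hNWl : (∑' z : SX × SY, ENNReal.ofReal
          (-((p z).toReal * (G z.2 + -Real.log (∑' x, πX x).toReal)
            + ((p z).toReal - (πX z.1 * (p.map Prod.snd) z.2).toReal / (∑' x, πX x).toReal))))
          ≠ ⊤ := by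
        refine ne_top_of_le_ne_top (b := (∑' z : SX × SY,
          (ENNReal.ofReal (-((p z).toReal * (G z.2 + -Real.log (∑' x, πX x).toReal)))
            + (πX z.1 * (p.map Prod.snd) z.2) * ENNReal.ofReal ((∑' x, πX x).toReal)⁻¹)))
          ?_ (ENNReal.tsum_le_tsum fun z => ?_)
        · rw [ENNReal.tsum_add, ENNReal.tsum_mul_right, hqsum]
          exact ENNReal.add_ne_top.mpr ⟨hNW _, ENNReal.mul_ne_top hs ENNReal.ofReal_ne_top⟩
        · have hneg : -((p z).toReal * (G z.2 + -Real.log (∑' x, πX x).toReal)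
              + ((p z).toReal - (πX z.1 * (p.map Prod.snd) z.2).toReal / (∑' x, πX x).toReal))
              = -((p z).toReal * (G z.2 + -Real.log (∑' x, πX x).toReal))
                + ((πX z.1 * (p.map Prod.snd) z.2).toReal / (∑' x, πX x).toReal
                  - (p z).toReal) := by ring
          rw [hneg]
          refine le_trans ENNReal.ofReal_add_le (add_le_add le_rfl ?_)
          refine le_trans (ENNReal.ofReal_le_ofReal
            (le_trans (sub_le_self _ ENNReal.toReal_nonneg) (le_of_eq (div_eq_mul_inv _ _))))
            (le_of_eq ?_)
          exact ofReal_toReal_mul _ (hqfin z) _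
      have hWl_sum : (∑' z : SX × SY, ((p z).toReal
          * (G z.2 + -Real.log (∑' x, πX x).toReal)
          + ((p z).toReal - (πX z.1 * (p.map Prod.snd) z.2).toReal / (∑' x, πX x).toReal)))
          = (∑' y, fkl (⇑(p.map Prod.snd)) πY y) + -Real.log (∑' x, πX x).toReal := by
        rw [Summable.tsum_add hWsum hesum, hSW _, hesumeq, add_zero]
      have hkeyL : (((∑' y, fkl (⇑(p.map Prod.snd)) πY y)
            + -Real.log (∑' x, πX x).toReal : ℝ) : EReal)
          ≤ klDiv (⇑p) (fun z : SX × SY => πX z.1 * πY z.2) := by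
        rw [← hWl_sum]
        refine tsum_le_klDiv _ _ _ ?_ hNf hPWl hNWl
        intro z hcnd
        by_cases hz : p z = 0
        · have hfz : fkl (⇑p) (fun z : SX × SY => πX z.1 * πY z.2) z = 0 := by simp [fkl, hz]
          rw [hfz, hz]
          simp only [ENNReal.toReal_zero, zero_mul, zero_add, zero_sub]
          have : (0:ℝ) ≤ (πX z.1 * (p.map Prod.snd) z.2).toReal / (∑' x, πX x).toReal := by
            positivity
          linarith
        · have hν : πX z.1 * πY z.2 ≠ 0 := by
            intro h0; exact hcnd ⟨h0, hz⟩
          have hπXz : πX z.1 ≠ 0 := fun h => hν (by rw [h, zero_mul])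
          have hπYz : πY z.2 ≠ 0 := fun h => hν (by rw [h, mul_zero])
          have ha : 0 < (p z).toReal := ENNReal.toReal_pos hz (hpfin z)
          have hpYz : (p.map Prod.snd) z.2 ≠ 0 := fun h =>
            hz (le_antisymm (le_trans (ple z) (le_of_eq h)) zero_le)
          have hb : 0 < ((p.map Prod.snd) z.2).toReal := ENNReal.toReal_pos hpYz (hpYfin _)
          have ht : 0 < (πY z.2).toReal := ENNReal.toReal_pos hπYz (hπYfin _)
          have hu0 : 0 < (πX z.1).toReal := ENNReal.toReal_pos hπXz (hπXfin _)
          have hfz : fkl (⇑p) (fun z : SX × SY => πX z.1 * πY z.2) z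
              = (p z).toReal * Real.log ((p z).toReal
                / ((πX z.1).toReal * (πY z.2).toReal)) := by
            show (p z).toReal * Real.log ((p z).toReal / (πX z.1 * πY z.2).toReal) = _
            rw [ENNReal.toReal_mul]
          have hqr : (πX z.1 * (p.map Prod.snd) z.2).toReal
              = (πX z.1).toReal * ((p.map Prod.snd) z.2).toReal := ENNReal.toReal_mul
          have hq0 : 0 < (πX z.1).toReal * ((p.map Prod.snd) z.2).toReal / (∑' x, πX x).toReal :=
            div_pos (mul_pos hu0 hb) hsr
          have hgibbs := gibbs_key ha hq0
          have hGz : G z.2 = Real.log (((p.map Prod.snd) z.2).toReal / (πY z.2).toReal) := rfl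
          have l1 : Real.log ((p z).toReal / ((πX z.1).toReal * (πY z.2).toReal))
              = Real.log (p z).toReal
                - (Real.log (πX z.1).toReal + Real.log (πY z.2).toReal) := by
            rw [Real.log_div ha.ne' (mul_pos hu0 ht).ne', Real.log_mul hu0.ne' ht.ne']
          have l2 : G z.2 = Real.log ((p.map Prod.snd) z.2).toReal - Real.log (πY z.2).toReal := by
            rw [hGz, Real.log_div hb.ne' ht.ne']
          have l3 : Real.log ((p z).toReal
              / ((πX z.1).toReal * ((p.map Prod.snd) z.2).toReal / (∑' x, πX x).toReal))
              = Real.log (p z).toReal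
                - (Real.log (πX z.1).toReal + Real.log ((p.map Prod.snd) z.2).toReal
                  - Real.log (∑' x, πX x).toReal) := by
            rw [Real.log_div ha.ne' hq0.ne', Real.log_div (mul_pos hu0 hb).ne' hsr.ne',
              Real.log_mul hu0.ne' hb.ne']
          rw [hfz, l1, l2, hqr]
          rw [l3] at hgibbs
          nlinarith [hgibbs, ha.le]
      rw [hBr]
      have hd2 : - ENNReal.log (∑' x, πX x) = ((-Real.log (∑' x, πX x).toReal : ℝ) : EReal) := by
        rw [ENNReal.log_pos_real hs0 hs, ← EReal.coe_neg]
      rw [hd2]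
      calc ((-Real.log (∑' x, πX x).toReal : ℝ) : EReal)
          = (((∑' y, fkl (⇑(p.map Prod.snd)) πY y) + -Real.log (∑' x, πX x).toReal : ℝ) : EReal)
            - ((∑' y, fkl (⇑(p.map Prod.snd)) πY y : ℝ) : EReal) := by
            rw [← EReal.coe_sub]; congr 1; ring
        _ ≤ klDiv (⇑p) (fun z : SX × SY => πX z.1 * πY z.2)
            - ((∑' y, fkl (⇑(p.map Prod.snd)) πY y : ℝ) : EReal) :=
            EReal.sub_le_sub hkeyL le_rfl
  · -- upper bound
    by_cases hc0 : (⨅ x, πX x) = 0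
    · rw [hc0, ENNReal.log_zero, EReal.neg_bot]
      exact le_top
    · have hcfin : (⨅ x, πX x) ≠ ⊤ := ne_top_of_le_ne_top (hπXfin x₀) (iInf_le _ x₀)
      have hcr : 0 < (⨅ x, πX x).toReal := ENNReal.toReal_pos hc0 hcfin
      have hkeyU : klDiv (⇑p) (fun z : SX × SY => πX z.1 * πY z.2)
          ≤ (((∑' y, fkl (⇑(p.map Prod.snd)) πY y)
            + -Real.log (⨅ x, πX x).toReal : ℝ) : EReal) := by
        rw [← hSW (-Real.log (⨅ x, πX x).toReal)]
        refine klDiv_le_tsum _ _ _ ?_ ?_ (hPW _) (hNW _)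
        · intro z h0
          rcases mul_eq_zero.mp h0 with h | h
          · exact absurd (le_antisymm (le_trans (iInf_le πX z.1) (le_of_eq h)) zero_le) hc0
          · exact le_antisymm (le_trans (ple z) (le_of_eq (htopB z.2 h))) zero_le
        · intro z
          by_cases hz : p z = 0
          · simp [fkl, hz]
          · have ha : 0 < (p z).toReal := ENNReal.toReal_pos hz (hpfin z)
            have hpYz : (p.map Prod.snd) z.2 ≠ 0 := fun h =>
              hz (le_antisymm (le_trans (ple z) (le_of_eq h)) zero_le)
            have hb : 0 < ((p.map Prod.snd) z.2).toReal := ENNReal.toReal_pos hpYz (hpYfin _)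
            have hab : (p z).toReal ≤ ((p.map Prod.snd) z.2).toReal :=
              ENNReal.toReal_mono (hpYfin _) (ple z)
            have hπYz : πY z.2 ≠ 0 := fun h => hpYz (htopB _ h)
            have ht : 0 < (πY z.2).toReal := ENNReal.toReal_pos hπYz (hπYfin _)
            have hu : (⨅ x, πX x).toReal ≤ (πX z.1).toReal :=
              ENNReal.toReal_mono (hπXfin _) (iInf_le πX z.1)
            have hu0 : 0 < (πX z.1).toReal := lt_of_lt_of_le hcr hu
            have hfz : fkl (⇑p) (fun z : SX × SY => πX z.1 * πY z.2) z
                = (p z).toReal * Real.log ((p z).toReal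
                  / ((πX z.1).toReal * (πY z.2).toReal)) := by
              show (p z).toReal * Real.log ((p z).toReal / (πX z.1 * πY z.2).toReal) = _
              rw [ENNReal.toReal_mul]
            rw [hfz]
            refine mul_le_mul_of_nonneg_left ?_ ENNReal.toReal_nonneg
            have hGz : G z.2 = Real.log (((p.map Prod.snd) z.2).toReal / (πY z.2).toReal) := rfl
            calc Real.log ((p z).toReal / ((πX z.1).toReal * (πY z.2).toReal))
                ≤ Real.log (((p.map Prod.snd) z.2).toReal / (πY z.2).toReal
                    / (⨅ x, πX x).toReal) := by
                  refine Real.log_le_log (by positivity) ?_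
                  rw [div_div]
                  refine div_le_div₀ hb.le hab (by positivity) ?_
                  calc (πY z.2).toReal * (⨅ x, πX x).toReal
                      ≤ (πY z.2).toReal * (πX z.1).toReal :=
                        mul_le_mul_of_nonneg_left hu ht.le
                    _ = (πX z.1).toReal * (πY z.2).toReal := mul_comm _ _
              _ = G z.2 + -Real.log (⨅ x, πX x).toReal := by
                  rw [hGz, Real.log_div (div_pos hb ht).ne' hcr.ne']; ring
      rw [hBr]
      have hd2 : - ENNReal.log (⨅ x, πX x)
          = ((-Real.log (⨅ x, πX x).toReal : ℝ) : EReal) := by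
        rw [ENNReal.log_pos_real hc0 hcfin, ← EReal.coe_neg]
      rw [hd2]
      calc klDiv (⇑p) (fun z : SX × SY => πX z.1 * πY z.2)
            - ((∑' y, fkl (⇑(p.map Prod.snd)) πY y : ℝ) : EReal)
          ≤ (((∑' y, fkl (⇑(p.map Prod.snd)) πY y)
              + -Real.log (⨅ x, πX x).toReal : ℝ) : EReal)
            - ((∑' y, fkl (⇑(p.map Prod.snd)) πY y : ℝ) : EReal) :=
            EReal.sub_le_sub hkeyU le_rfl
        _ = ((-Real.log (⨅ x, πX x).toReal : ℝ) : EReal) := by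
            rw [← EReal.coe_sub]; congr 1; ring
end

section
/- Second law for stochastic matrices: if μ, ν are probability measures on a countable set S, π ∈ M₊(S), and there exists a π-stochastic matrix p (stochastic matrix with Σ_{s'} π(s')p(s',s) = π(s) for all s) transforming μ into ν (i.e., Σ_{s'} μ(s')p(s',s) = ν(s) for all s), then D(μ‖π) ≥ D(ν‖π). -/
open scoped ENNReal

namespace SecondLawAux
open Real

/-- tangent (subgradient) inequality for the convex function `x log (x/y)`. -/
lemma tangent_logsum {x y n q : ℝ} (hx : 0 ≤ x) (hy : 0 ≤ y) (hn : 0 < n) (hq : 0 < q)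
    (h0 : y = 0 → x = 0) :
    x * (Real.log (n / q) + 1) - y * (n / q) ≤ x * Real.log (x / y) := by
  rcases eq_or_lt_of_le hx with h | hx'
  · rw [← h]
    have : 0 ≤ y * (n / q) := by positivity
    simp; linarith
  · have hy' : 0 < y := by
      rcases eq_or_lt_of_le hy with h | h
      · exact absurd (h0 h.symm) (ne_of_gt hx')
      · exact h
    have h1 : Real.log ((y * n) / (x * q)) ≤ (y * n) / (x * q) - 1 :=
      Real.log_le_sub_one_of_pos (by positivity)
    have h2 : Real.log (x / y) = Real.log (n / q) - Real.log ((y * n) / (x * q)) := by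
      rw [Real.log_div (by positivity) (by positivity), Real.log_div (by positivity) (by positivity),
        Real.log_div (by positivity) (by positivity), Real.log_mul (by positivity) (by positivity),
        Real.log_mul (by positivity) (by positivity)]
      ring
    have h3 : x * ((y * n) / (x * q)) = y * (n / q) := by field_simp
    calc x * (Real.log (n / q) + 1) - y * (n / q)
        = x * (Real.log (n / q) - ((y * n) / (x * q) - 1)) + (x * ((y * n) / (x * q)) - y * (n/q)) := by ring
      _ = x * (Real.log (n / q) - ((y * n) / (x * q) - 1)) := by rw [h3]; ring
      _ ≤ x * (Real.log (n / q) - Real.log ((y * n) / (x * q))) := by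
          apply mul_le_mul_of_nonneg_left _ hx
          linarith
      _ = x * Real.log (x / y) := by rw [h2]

/-- bound on the negative part: `-(x log(x/y)) ≤ y`. -/
lemma neg_phi_le {x y : ℝ} (hx : 0 ≤ x) (hy : 0 ≤ y) : -(x * Real.log (x / y)) ≤ y := by
  rcases eq_or_lt_of_le hx with h | hx'
  · rw [← h]; simpa using hy
  rcases eq_or_lt_of_le hy with h | hy'
  · rw [← h, div_zero, Real.log_zero]; simp
  have h1 : Real.log (y / x) ≤ y / x - 1 := Real.log_le_sub_one_of_pos (by positivity)
  have h2 : Real.log (x / y) = -Real.log (y / x) := by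
    rw [← Real.log_inv]; congr 1; field_simp
  rw [h2]
  have h3 : x * (y / x) = y := by field_simp
  nlinarith [mul_le_mul_of_nonneg_left h1 hx]

noncomputable def gg (t : ℝ) : ℝ := if t ≤ 1 then t - t * Real.log t else 1

noncomputable def cc (y : ℝ) : ℝ := if y ≤ 1 then -Real.log y else 0

lemma gg_zero : gg 0 = 0 := by simp [gg]

lemma gg_nonneg {t : ℝ} (ht : 0 ≤ t) : 0 ≤ gg t := by
  unfold gg
  split_ifs with h
  · have : Real.log t ≤ 0 := by
      rcases eq_or_lt_of_le ht with h' | h'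
      · rw [← h']; simp
      · exact Real.log_nonpos (le_of_lt h') h
    nlinarith
  · norm_num

lemma gg_le_one {t : ℝ} (ht : 0 ≤ t) : gg t ≤ 1 := by
  unfold gg
  split_ifs with h
  · rcases eq_or_lt_of_le ht with h' | h'
    · rw [← h']; norm_num
    · have h1 : Real.log t⁻¹ ≤ t⁻¹ - 1 := Real.log_le_sub_one_of_pos (by positivity)
      rw [Real.log_inv] at h1
      have h2 : t * t⁻¹ = 1 := by field_simp
      nlinarith [mul_le_mul_of_nonneg_left h1 (le_of_lt h')]
  · exact le_refl 1

lemma cc_nonneg {y : ℝ} (hy : 0 < y) : 0 ≤ cc y := by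
  unfold cc
  split_ifs with h
  · simpa using Real.log_nonpos (le_of_lt hy) h
  · norm_num

lemma eta_le_gg {t : ℝ} (ht : 0 ≤ t) : -(t * Real.log t) ≤ gg t := by
  unfold gg
  split_ifs with h
  · linarith
  · push_neg at h
    have : 0 ≤ Real.log t := Real.log_nonneg (le_of_lt h)
    nlinarith

lemma gg_le_max {t : ℝ} (ht : 0 ≤ t) : gg t ≤ max (-(t * Real.log t)) 0 + t := by
  unfold gg
  split_ifs with h
  · have := le_max_left (-(t * Real.log t)) 0
    linarith
  · push_neg at h
    have := le_max_right (-(t * Real.log t)) 0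
    linarith

lemma gg_tangent {t y : ℝ} (ht : 0 ≤ t) (hy : 0 < y) : gg t + cc y * y ≤ gg y + cc y * t := by
  by_cases hy1 : y ≤ 1
  · have hcc : cc y = -Real.log y := if_pos hy1
    have hgy : gg y = y - y * Real.log y := if_pos hy1
    by_cases ht1 : t ≤ 1
    · have hgt : gg t = t - t * Real.log t := if_pos ht1
      rw [hcc, hgy, hgt]
      -- reduces to t * (log y - log t) ≤ y - t
      rcases eq_or_lt_of_le ht with h | h
      · rw [← h]; simp; nlinarith [Real.log_nonpos (le_of_lt hy) hy1]
      · have h1 : Real.log (y / t) ≤ y / t - 1 := Real.log_le_sub_one_of_pos (by positivity)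
        have h2 : Real.log (y / t) = Real.log y - Real.log t := Real.log_div (ne_of_gt hy) (ne_of_gt h)
        have h3 : t * (y / t) = y := by field_simp
        nlinarith [mul_le_mul_of_nonneg_left h1 (le_of_lt h)]
    · have hgt : gg t = 1 := if_neg ht1
      push_neg at ht1
      rw [hcc, hgy, hgt]
      -- 1 + (-log y) * y ≤ y - y log y + (-log y) * t  ⟺ 1 ≤ y - t log y
      have h1 : Real.log y ≤ y - 1 := Real.log_le_sub_one_of_pos hy
      have h2 : 0 ≤ -Real.log y := by simpa using Real.log_nonpos (le_of_lt hy) hy1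
      nlinarith [mul_le_mul_of_nonneg_left (le_of_lt ht1) h2]
  · have hcc : cc y = 0 := if_neg hy1
    have hgy : gg y = 1 := if_neg hy1
    rw [hcc, hgy]
    simpa using gg_le_one ht



noncomputable def phiR (x a : ℝ≥0∞) : ℝ := x.toReal * Real.log (x.toReal / a.toReal)

noncomputable def Ater (x a : ℝ≥0∞) : ℝ≥0∞ :=
  if a = 0 ∧ x ≠ 0 then ⊤ else ENNReal.ofReal (phiR x a)

noncomputable def Bter (x a : ℝ≥0∞) : ℝ≥0∞ := ENNReal.ofReal (-(phiR x a))

noncomputable def Gter (x a : ℝ≥0∞) : ℝ≥0∞ := ENNReal.ofReal (gg (x.toReal / a.toReal))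

lemma phiR_zero_left (a : ℝ≥0∞) : phiR 0 a = 0 := by simp [phiR]

lemma phiR_zero_right (x : ℝ≥0∞) : phiR x 0 = 0 := by simp [phiR]

lemma Bter_zero_right (x : ℝ≥0∞) : Bter x 0 = 0 := by simp [Bter, phiR_zero_right]

lemma Ater_zero_left (a : ℝ≥0∞) : Ater 0 a = 0 := by simp [Ater, phiR_zero_left]

lemma Bter_zero_left (a : ℝ≥0∞) : Bter 0 a = 0 := by simp [Bter, phiR_zero_left]

lemma ofReal_max_zero (x : ℝ) : ENNReal.ofReal (max x 0) = ENNReal.ofReal x := by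
  rcases le_total x 0 with h | h
  · rw [max_eq_right h, ENNReal.ofReal_zero, eq_comm, ENNReal.ofReal_eq_zero]; exact h
  · rw [max_eq_left h]

lemma toReal_ofReal_max (x : ℝ) : (ENNReal.ofReal x).toReal = max x 0 := by
  rcases le_total x 0 with h | h
  · rw [max_eq_right h, ENNReal.ofReal_eq_zero.mpr h]; simp
  · rw [max_eq_left h, ENNReal.toReal_ofReal h]

lemma ofReal_ineq {r α β : ℝ} (hα : 0 ≤ α) (hβ : 0 ≤ β) (h : r ≤ α - β) :
    ENNReal.ofReal r + ENNReal.ofReal β ≤ ENNReal.ofReal α + ENNReal.ofReal (-r) := by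
  rcases le_total 0 r with hr | hr
  · rw [← ENNReal.ofReal_add hr hβ]
    exact le_add_right (ENNReal.ofReal_le_ofReal (by linarith))
  · rw [ENNReal.ofReal_eq_zero.mpr hr, zero_add, ← ENNReal.ofReal_add hα (by linarith : (0:ℝ) ≤ -r)]
    exact ENNReal.ofReal_le_ofReal (by linarith)

lemma exists_ne_zero_of_tsum_ne_zero {S : Type*} {f : S → ℝ≥0∞} (h : ∑' s, f s ≠ 0) :
    ∃ s, f s ≠ 0 := by
  by_contra hc
  push_neg at hc
  exact h (by simp [hc])

lemma all_zero_of_tsum_eq_zero {S : Type*} {f : S → ℝ≥0∞} (h : ∑' s, f s = 0) (s : S) :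
    f s = 0 := by
  have := ENNReal.le_tsum (f := f) s
  rw [h] at this
  simpa using this

/-- Row computation for the positive part. -/
lemma row_eq_A {S : Type*} (m q : ℝ≥0∞) (hm : m ≠ ⊤) (hq : q ≠ ⊤) (t : S → ℝ≥0∞)
    (ht : ∀ s, t s ≠ ⊤) (hrowt : ∑' s, t s = 1) :
    ∑' s, Ater (m * t s) (q * t s) = Ater m q := by
  by_cases hm0 : m = 0
  · subst hm0
    simp only [zero_mul, Ater_zero_left]
    simp
  by_cases hq0 : q = 0
  · subst hq0
    have hR : Ater m 0 = ⊤ := if_pos ⟨rfl, hm0⟩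
    obtain ⟨s₀, hs₀⟩ : ∃ s, t s ≠ 0 := exists_ne_zero_of_tsum_ne_zero (by rw [hrowt]; exact one_ne_zero)
    have hterm : Ater (m * t s₀) (0 * t s₀) = ⊤ := by
      rw [zero_mul]
      exact if_pos ⟨rfl, mul_ne_zero hm0 hs₀⟩
    rw [hR]
    refine top_le_iff.mp ?_
    calc (⊤:ℝ≥0∞) = Ater (m * t s₀) (0 * t s₀) := hterm.symm
      _ ≤ _ := ENNReal.le_tsum s₀
  · have hmR : 0 < m.toReal := ENNReal.toReal_pos hm0 hm
    have hqR : 0 < q.toReal := ENNReal.toReal_pos hq0 hq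
    set G0 := m.toReal * Real.log (m.toReal / q.toReal) with hG0
    have hterm : ∀ s, Ater (m * t s) (q * t s) = t s * ENNReal.ofReal G0 := by
      intro s
      have hcond : ¬(q * t s = 0 ∧ m * t s ≠ 0) := by
        rintro ⟨h1, h2⟩
        rcases mul_eq_zero.mp h1 with h | h
        · exact hq0 h
        · exact h2 (by rw [h, mul_zero])
      rw [Ater, if_neg hcond]
      have hphi : phiR (m * t s) (q * t s) = (t s).toReal * G0 := by
        by_cases ht0 : t s = 0
        · simp [phiR, ht0]
        · have htR : 0 < (t s).toReal := ENNReal.toReal_pos ht0 (ht s)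
          rw [phiR, ENNReal.toReal_mul, ENNReal.toReal_mul,
            mul_div_mul_right _ _ (ne_of_gt htR)]
          ring
      rw [hphi, ENNReal.ofReal_mul ENNReal.toReal_nonneg, ENNReal.ofReal_toReal (ht s)]
    rw [tsum_congr hterm, ENNReal.tsum_mul_right, hrowt, one_mul, Ater,
      if_neg (by rintro ⟨h1, _⟩; exact hq0 h1)]
    rfl

/-- Row computation for the negative part. -/
lemma row_eq_B {S : Type*} (m q : ℝ≥0∞) (hm : m ≠ ⊤) (hq : q ≠ ⊤) (t : S → ℝ≥0∞)
    (ht : ∀ s, t s ≠ ⊤) (hrowt : ∑' s, t s = 1) :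
    ∑' s, Bter (m * t s) (q * t s) = Bter m q := by
  by_cases hm0 : m = 0
  · subst hm0
    simp only [zero_mul, Bter_zero_left]
    simp
  by_cases hq0 : q = 0
  · subst hq0
    simp only [zero_mul, Bter_zero_right]
    simp
  · have hmR : 0 < m.toReal := ENNReal.toReal_pos hm0 hm
    have hqR : 0 < q.toReal := ENNReal.toReal_pos hq0 hq
    set G0 := m.toReal * Real.log (m.toReal / q.toReal) with hG0
    have hterm : ∀ s, Bter (m * t s) (q * t s) = t s * ENNReal.ofReal (-G0) := by
      intro s
      have hphi : phiR (m * t s) (q * t s) = (t s).toReal * G0 := by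
        by_cases ht0 : t s = 0
        · simp [phiR, ht0]
        · have htR : 0 < (t s).toReal := ENNReal.toReal_pos ht0 (ht s)
          rw [phiR, ENNReal.toReal_mul, ENNReal.toReal_mul,
            mul_div_mul_right _ _ (ne_of_gt htR)]
          ring
      rw [Bter, hphi]
      have : -((t s).toReal * G0) = (t s).toReal * (-G0) := by ring
      rw [this, ENNReal.ofReal_mul ENNReal.toReal_nonneg, ENNReal.ofReal_toReal (ht s)]
    rw [tsum_congr hterm, ENNReal.tsum_mul_right, hrowt, one_mul]
    rfl


/-- Column inequality: log-sum inequality in `ℝ≥0∞` cross-term form. -/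
lemma col_logsum {S : Type*} (πs νs : ℝ≥0∞) (hπt : πs ≠ ⊤) (hνt : νs ≠ ⊤)
    (w w' : S → ℝ≥0∞) (hw : ∀ i, w i ≠ ⊤) (hw' : ∀ i, w' i ≠ ⊤)
    (hsum : ∑' i, w i = νs) (hsum' : ∑' i, w' i = πs) :
    Ater νs πs + ∑' i, Bter (w i) (w' i) ≤ (∑' i, Ater (w i) (w' i)) + Bter νs πs := by
  by_cases hC : ∃ i, w' i = 0 ∧ w i ≠ 0
  · obtain ⟨i, h1, h2⟩ := hC
    have hterm : Ater (w i) (w' i) = ⊤ := if_pos ⟨h1, h2⟩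
    have hT : ∑' i, Ater (w i) (w' i) = ⊤ := by
      refine top_le_iff.mp ?_
      calc (⊤:ℝ≥0∞) = Ater (w i) (w' i) := hterm.symm
        _ ≤ _ := ENNReal.le_tsum i
    rw [hT, top_add]
    exact le_top
  push_neg at hC
  by_cases hπ0 : πs = 0
  · have hw'0 : ∀ i, w' i = 0 := all_zero_of_tsum_eq_zero (by rw [hsum', hπ0])
    have hw0 : ∀ i, w i = 0 := fun i => hC i (hw'0 i)
    have hν0 : νs = 0 := by rw [← hsum]; simp [hw0]
    rw [hν0, Ater_zero_left]
    have hB : ∀ i, Bter (w i) (w' i) = 0 := fun i => by rw [hw0 i, Bter_zero_left]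
    rw [tsum_congr hB]
    simp
  by_cases hν0 : νs = 0
  · have hw0 : ∀ i, w i = 0 := all_zero_of_tsum_eq_zero (by rw [hsum, hν0])
    rw [hν0, Ater_zero_left]
    have hB : ∀ i, Bter (w i) (w' i) = 0 := fun i => by rw [hw0 i, Bter_zero_left]
    rw [tsum_congr hB]
    simp
  by_cases hA : ∑' i, Ater (w i) (w' i) = ⊤
  · rw [hA, top_add]; exact le_top
  have hn : 0 < νs.toReal := ENNReal.toReal_pos hν0 hνt
  have hq : 0 < πs.toReal := ENNReal.toReal_pos hπ0 hπt
  have hAterm : ∀ i, Ater (w i) (w' i) = ENNReal.ofReal (phiR (w i) (w' i)) := fun i =>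
    if_neg (by rintro ⟨h1, h2⟩; exact h2 (hC i h1))
  have hApos : ∑' i, ENNReal.ofReal (phiR (w i) (w' i)) ≠ ⊤ := by
    rw [← tsum_congr hAterm]; exact hA
  have hBle : ∀ i, Bter (w i) (w' i) ≤ w' i := by
    intro i
    calc Bter (w i) (w' i) ≤ ENNReal.ofReal (w' i).toReal :=
          ENNReal.ofReal_le_ofReal (neg_phi_le ENNReal.toReal_nonneg ENNReal.toReal_nonneg)
      _ = w' i := ENNReal.ofReal_toReal (hw' i)
  have hBfin : ∑' i, Bter (w i) (w' i) ≠ ⊤ := by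
    refine ne_top_of_le_ne_top hπt ?_
    rw [← hsum']
    exact ENNReal.tsum_le_tsum hBle
  have hfp : Summable (fun i => max (phiR (w i) (w' i)) 0) := by
    have h := ENNReal.summable_toReal hApos
    simpa [toReal_ofReal_max] using h
  have hfm : Summable (fun i => max (-(phiR (w i) (w' i))) 0) := by
    have h := ENNReal.summable_toReal hBfin
    simpa [Bter, toReal_ofReal_max] using h
  have hfs : Summable (fun i => phiR (w i) (w' i)) :=
    (hfp.sub hfm).congr (fun i => max_zero_sub_max_neg_zero_eq_self (phiR (w i) (w' i)))
  have hαβ : ∑' i, phiR (w i) (w' i) =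
      (∑' i, max (phiR (w i) (w' i)) 0) - ∑' i, max (-(phiR (w i) (w' i))) 0 := by
    rw [← Summable.tsum_sub hfp hfm]
    exact tsum_congr fun i => (max_zero_sub_max_neg_zero_eq_self (phiR (w i) (w' i))).symm
  have hwa : Summable (fun i => (w i).toReal) := ENNReal.summable_toReal (by rw [hsum]; exact hνt)
  have hwb : Summable (fun i => (w' i).toReal) := ENNReal.summable_toReal (by rw [hsum']; exact hπt)
  have hta : ∑' i, (w i).toReal = νs.toReal := by rw [← ENNReal.tsum_toReal_eq hw, hsum]
  have htb : ∑' i, (w' i).toReal = πs.toReal := by rw [← ENNReal.tsum_toReal_eq hw', hsum']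
  have hLle : ∀ i, (w i).toReal * (Real.log (νs.toReal / πs.toReal) + 1)
      - (w' i).toReal * (νs.toReal / πs.toReal) ≤ phiR (w i) (w' i) := by
    intro i
    refine tangent_logsum ENNReal.toReal_nonneg ENNReal.toReal_nonneg hn hq ?_
    intro hb0
    have hz : w' i = 0 := by
      rcases (ENNReal.toReal_eq_zero_iff _).mp hb0 with h | h
      · exact h
      · exact absurd h (hw' i)
    rw [hC i hz]
    simp
  have hkey : νs.toReal * Real.log (νs.toReal / πs.toReal) ≤
      (∑' i, max (phiR (w i) (w' i)) 0) - ∑' i, max (-(phiR (w i) (w' i))) 0 := by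
    have h1 : ∑' i, ((w i).toReal * (Real.log (νs.toReal / πs.toReal) + 1)
        - (w' i).toReal * (νs.toReal / πs.toReal)) = νs.toReal * Real.log (νs.toReal / πs.toReal) := by
      rw [Summable.tsum_sub (hwa.mul_right _) (hwb.mul_right _), tsum_mul_right, tsum_mul_right, hta, htb]
      have e1 : πs.toReal * (νs.toReal / πs.toReal) = νs.toReal := by field_simp
      rw [e1]; ring
    rw [← hαβ, ← h1]
    exact Summable.tsum_le_tsum hLle ((hwa.mul_right _).sub (hwb.mul_right _)) hfs
  have hAν : Ater νs πs = ENNReal.ofReal (νs.toReal * Real.log (νs.toReal / πs.toReal)) := by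
    rw [Ater, if_neg (by rintro ⟨h1, _⟩; exact hπ0 h1)]
    rfl
  have hBν : Bter νs πs = ENNReal.ofReal (-(νs.toReal * Real.log (νs.toReal / πs.toReal))) := rfl
  have hAs : ∑' i, Ater (w i) (w' i) = ENNReal.ofReal (∑' i, max (phiR (w i) (w' i)) 0) := by
    rw [tsum_congr hAterm, eq_comm, ENNReal.ofReal_tsum_of_nonneg (fun i => le_max_right _ _) hfp]
    exact tsum_congr fun i => ofReal_max_zero (phiR (w i) (w' i))
  have hBs : ∑' i, Bter (w i) (w' i) = ENNReal.ofReal (∑' i, max (-(phiR (w i) (w' i))) 0) := by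
    rw [eq_comm, ENNReal.ofReal_tsum_of_nonneg (fun i => le_max_right _ _) hfm]
    exact tsum_congr fun i => ofReal_max_zero (-(phiR (w i) (w' i)))
  rw [hAν, hBν, hAs, hBs]
  exact ofReal_ineq (tsum_nonneg fun i => le_max_right _ _) (tsum_nonneg fun i => le_max_right _ _)
    hkey


/-- The negative part is dominated by `a · g(x/a)`. -/
lemma Bter_le_Gter (x a : ℝ≥0∞) (hx : x ≠ ⊤) (ha : a ≠ ⊤) : Bter x a ≤ a * Gter x a := by
  by_cases ha0 : a = 0
  · rw [ha0, Bter_zero_right, zero_mul]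
  · have hq : 0 < a.toReal := ENNReal.toReal_pos ha0 ha
    have h1 : -(phiR x a) = a.toReal * (-(( x.toReal / a.toReal) * Real.log (x.toReal / a.toReal))) := by
      rw [phiR]
      field_simp
    have h2 : -(phiR x a) ≤ a.toReal * gg (x.toReal / a.toReal) := by
      rw [h1]
      exact mul_le_mul_of_nonneg_left (eta_le_gg (by positivity)) (le_of_lt hq)
    calc Bter x a ≤ ENNReal.ofReal (a.toReal * gg (x.toReal / a.toReal)) :=
          ENNReal.ofReal_le_ofReal h2
      _ = ENNReal.ofReal a.toReal * ENNReal.ofReal (gg (x.toReal / a.toReal)) :=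
          ENNReal.ofReal_mul (le_of_lt hq)
      _ = a * Gter x a := by rw [ENNReal.ofReal_toReal ha]; rfl

/-- `a · g(x/a)` is dominated by the negative part plus `x`. -/
lemma Gter_le_Bter (x a : ℝ≥0∞) (hx : x ≠ ⊤) (ha : a ≠ ⊤) : a * Gter x a ≤ Bter x a + x := by
  by_cases ha0 : a = 0
  · rw [ha0, zero_mul]; exact zero_le
  · have hq : 0 < a.toReal := ENNReal.toReal_pos ha0 ha
    have ht : (0:ℝ) ≤ x.toReal / a.toReal := by positivity
    have h1 : a.toReal * gg (x.toReal / a.toReal) ≤ max (-(phiR x a)) 0 + x.toReal := by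
      have h2 := mul_le_mul_of_nonneg_left (gg_le_max ht) (le_of_lt hq)
      have e1 : a.toReal * (x.toReal / a.toReal) = x.toReal := by field_simp
      have e2 : a.toReal * max (-((x.toReal / a.toReal) * Real.log (x.toReal / a.toReal))) 0
          = max (-(phiR x a)) 0 := by
        rw [mul_max_of_nonneg _ _ (le_of_lt hq), mul_zero]
        congr 1
        rw [phiR]
        field_simp
      calc a.toReal * gg (x.toReal / a.toReal)
          ≤ a.toReal * (max (-((x.toReal / a.toReal) * Real.log (x.toReal / a.toReal))) 0
            + x.toReal / a.toReal) := h2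
        _ = max (-(phiR x a)) 0 + x.toReal := by rw [mul_add, e2, e1]
    calc a * Gter x a = ENNReal.ofReal a.toReal * ENNReal.ofReal (gg (x.toReal / a.toReal)) := by
          rw [ENNReal.ofReal_toReal ha]; rfl
      _ = ENNReal.ofReal (a.toReal * gg (x.toReal / a.toReal)) :=
          (ENNReal.ofReal_mul (le_of_lt hq)).symm
      _ ≤ ENNReal.ofReal (max (-(phiR x a)) 0 + x.toReal) := ENNReal.ofReal_le_ofReal h1
      _ = ENNReal.ofReal (max (-(phiR x a)) 0) + ENNReal.ofReal x.toReal :=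
          ENNReal.ofReal_add (le_max_right _ _) ENNReal.toReal_nonneg
      _ = Bter x a + x := by rw [ofReal_max_zero, ENNReal.ofReal_toReal hx]; rfl

/-- Column Jensen inequality for the concave capped entropy `gg`. -/
lemma col_jensen {S : Type*} (πs νs : ℝ≥0∞) (hπt : πs ≠ ⊤) (hνt : νs ≠ ⊤)
    (μi πi pi : S → ℝ≥0∞) (hμt : ∀ i, μi i ≠ ⊤) (hπit : ∀ i, πi i ≠ ⊤)
    (hstat : ∑' i, πi i * pi i = πs) (htrans : ∑' i, μi i * pi i = νs) :
    ∑' i, (πi i * pi i) * Gter (μi i) (πi i) ≤ πs * Gter νs πs := by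
  by_cases hπ0 : πs = 0
  · have h0 : ∀ i, πi i * pi i = 0 := all_zero_of_tsum_eq_zero (by rw [hstat, hπ0])
    have : ∀ i, (πi i * pi i) * Gter (μi i) (πi i) = 0 := fun i => by rw [h0 i, zero_mul]
    rw [tsum_congr this, tsum_zero]
    exact zero_le
  by_cases hν0 : νs = 0
  · have h0 : ∀ i, μi i * pi i = 0 := all_zero_of_tsum_eq_zero (by rw [htrans, hν0])
    have hz : ∀ i, (πi i * pi i) * Gter (μi i) (πi i) = 0 := by
      intro i
      rcases mul_eq_zero.mp (h0 i) with h | h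
      · have : Gter (μi i) (πi i) = 0 := by
          rw [Gter, h]
          simp [gg_zero]
        rw [this, mul_zero]
      · rw [h, mul_zero, zero_mul]
    rw [tsum_congr hz, tsum_zero]
    exact zero_le
  · have hq : 0 < πs.toReal := ENNReal.toReal_pos hπ0 hπt
    have hnn : 0 < νs.toReal := ENNReal.toReal_pos hν0 hνt
    set y : ℝ := νs.toReal / πs.toReal with hy'
    have hy : 0 < y := by positivity
    have hterm : ∀ i, (πi i * pi i) * Gter (μi i) (πi i) + (πi i * pi i) * ENNReal.ofReal (cc y * y)
        ≤ (πi i * pi i) * ENNReal.ofReal (gg y) + ENNReal.ofReal (cc y) * (μi i * pi i) := by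
      intro i
      by_cases hz : πi i * pi i = 0
      · rw [hz, zero_mul, zero_mul, zero_add]
        exact le_add_left zero_le
      · have hπi0 : πi i ≠ 0 := fun h => hz (by rw [h, zero_mul])
        have hqi : 0 < (πi i).toReal := ENNReal.toReal_pos hπi0 (hπit i)
        have htR : (0:ℝ) ≤ (μi i).toReal / (πi i).toReal := by positivity
        have htan := gg_tangent htR hy
        have h1 : ENNReal.ofReal (gg ((μi i).toReal / (πi i).toReal)) + ENNReal.ofReal (cc y * y)
            ≤ ENNReal.ofReal (gg y) + ENNReal.ofReal (cc y * ((μi i).toReal / (πi i).toReal)) := by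
          rw [← ENNReal.ofReal_add (gg_nonneg htR) (mul_nonneg (cc_nonneg hy) (le_of_lt hy)),
            ← ENNReal.ofReal_add (gg_nonneg (le_of_lt hy)) (mul_nonneg (cc_nonneg hy) htR)]
          exact ENNReal.ofReal_le_ofReal htan
        have h2 := mul_le_mul_right h1 (πi i * pi i)
        rw [mul_add, mul_add] at h2
        refine h2.trans (le_of_eq ?_)
        congr 1
        rw [ENNReal.ofReal_mul (cc_nonneg hy)]
        calc (πi i * pi i) * (ENNReal.ofReal (cc y) * ENNReal.ofReal ((μi i).toReal / (πi i).toReal))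
            = ENNReal.ofReal (cc y) * ((πi i * ENNReal.ofReal ((μi i).toReal / (πi i).toReal)) * pi i) := by
              ring
          _ = ENNReal.ofReal (cc y) * (μi i * pi i) := by
              congr 2
              rw [← ENNReal.ofReal_toReal (hπit i), ← ENNReal.ofReal_mul ENNReal.toReal_nonneg]
              rw [ENNReal.toReal_ofReal ENNReal.toReal_nonneg]
              rw [mul_div_cancel₀ _ (ne_of_gt hqi)]
              exact ENNReal.ofReal_toReal (hμt i)
    have hsum := ENNReal.tsum_le_tsum hterm
    rw [ENNReal.tsum_add, ENNReal.tsum_add, ENNReal.tsum_mul_right, ENNReal.tsum_mul_right,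
      ENNReal.tsum_mul_left, hstat, htrans] at hsum
    have hX : πs * ENNReal.ofReal (cc y * y) = ENNReal.ofReal (cc y) * νs := by
      rw [ENNReal.ofReal_mul (cc_nonneg hy), mul_comm πs _, mul_assoc]
      congr 1
      rw [← ENNReal.ofReal_toReal hπt, ← ENNReal.ofReal_mul (by positivity : (0:ℝ) ≤ y)]
      rw [hy', div_mul_cancel₀ _ (ne_of_gt hq)]
      exact ENNReal.ofReal_toReal hνt
    rw [hX] at hsum
    have hXfin : ENNReal.ofReal (cc y) * νs ≠ ⊤ := ENNReal.mul_ne_top ENNReal.ofReal_ne_top hνt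
    have := (ENNReal.add_le_add_iff_right hXfin).mp hsum
    exact this.trans (le_of_eq rfl)


lemma ecoe_fin (x : ℝ≥0∞) (h : x ≠ ⊤) : (x : EReal) = ((x.toReal : ℝ) : EReal) := by
  conv_lhs => rw [← ENNReal.ofReal_toReal h]
  rw [EReal.coe_ennreal_ofReal, max_eq_left ENNReal.toReal_nonneg]

end SecondLawAux

lemma klDiv_eq {S : Type*} (μ π : S → ℝ≥0∞) :
    klDiv μ π = ((∑' s, SecondLawAux.Ater (μ s) (π s) : ℝ≥0∞) : EReal)
      - ((∑' s, SecondLawAux.Bter (μ s) (π s) : ℝ≥0∞) : EReal) := rfl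


/-- Second law of thermodynamics for stochastic matrices: if `μ, ν` are probability measures
on a countable set `S`, `π ∈ M₊(S)`, and there is a `π`-stochastic matrix `p` (rows sum to 1,
`π` stationary) transforming `μ` into `ν`, then `D(μ‖π) ≥ D(ν‖π)`. -/
theorem second_law_stochastic {S : Type*} [Countable S] (π : S → ℝ≥0∞)
    (hfin : ∀ s, π s ≠ ⊤) (hne : ∃ s, π s ≠ 0)
    (μ ν : PMF S) (p : S → S → ℝ≥0∞)
    (hrow : ∀ s, ∑' s', p s s' = 1)
    (hstat : ∀ s, ∑' s', π s' * p s' s = π s)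
    (htrans : ∀ s, ∑' s', μ s' * p s' s = ν s) :
    klDiv (⇑ν) π ≤ klDiv (⇑μ) π := by
  open SecondLawAux in
  have hμt : ∀ s, μ s ≠ ⊤ := fun s => μ.apply_ne_top s
  have hνt : ∀ s, ν s ≠ ⊤ := fun s => ν.apply_ne_top s
  have hpt : ∀ s' s, p s' s ≠ ⊤ := by
    intro s' s
    refine ne_top_of_le_ne_top ENNReal.one_ne_top ?_
    rw [← hrow s']
    exact ENNReal.le_tsum s
  have hwt : ∀ s' s, μ s' * p s' s ≠ ⊤ := fun s' s => ENNReal.mul_ne_top (hμt s') (hpt s' s)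
  have hw't : ∀ s' s, π s' * p s' s ≠ ⊤ := fun s' s => ENNReal.mul_ne_top (hfin s') (hpt s' s)
  have h2A : ∑' s, ∑' s', Ater (μ s' * p s' s) (π s' * p s' s) = ∑' s', Ater (μ s') (π s') := by
    rw [ENNReal.tsum_comm]
    exact tsum_congr fun s' => row_eq_A (μ s') (π s') (hμt s') (hfin s') (p s') (hpt s') (hrow s')
  have h2B : ∑' s, ∑' s', Bter (μ s' * p s' s) (π s' * p s' s) = ∑' s', Bter (μ s') (π s') := by
    rw [ENNReal.tsum_comm]
    exact tsum_congr fun s' => row_eq_B (μ s') (π s') (hμt s') (hfin s') (p s') (hpt s') (hrow s')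
  have hI : (∑' s, Ater (ν s) (π s)) + ∑' s', Bter (μ s') (π s')
      ≤ (∑' s', Ater (μ s') (π s')) + ∑' s, Bter (ν s) (π s) := by
    have hcol : ∀ s, Ater (ν s) (π s) + ∑' s', Bter (μ s' * p s' s) (π s' * p s' s)
        ≤ (∑' s', Ater (μ s' * p s' s) (π s' * p s' s)) + Bter (ν s) (π s) := fun s =>
      col_logsum (π s) (ν s) (hfin s) (hνt s) _ _ (fun i => hwt i s) (fun i => hw't i s)
        (htrans s) (hstat s)
    have h := ENNReal.tsum_le_tsum hcol
    rw [ENNReal.tsum_add, ENNReal.tsum_add, h2A, h2B] at h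
    exact h
  have hII : (∑' s', Bter (μ s') (π s')) ≤ (∑' s, Bter (ν s) (π s)) + 1 := by
    have step2 : ∀ s', π s' * Gter (μ s') (π s')
        = ∑' s, (π s' * p s' s) * Gter (μ s') (π s') := by
      intro s'
      rw [eq_comm]
      calc ∑' s, (π s' * p s' s) * Gter (μ s') (π s')
          = ∑' s, (π s' * Gter (μ s') (π s')) * p s' s := tsum_congr fun s => by ring
        _ = (π s' * Gter (μ s') (π s')) * ∑' s, p s' s := by rw [← ENNReal.tsum_mul_left]
        _ = π s' * Gter (μ s') (π s') := by rw [hrow s', mul_one]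
    calc ∑' s', Bter (μ s') (π s')
        ≤ ∑' s', π s' * Gter (μ s') (π s') :=
          ENNReal.tsum_le_tsum fun s' => Bter_le_Gter _ _ (hμt s') (hfin s')
      _ = ∑' s', ∑' s, (π s' * p s' s) * Gter (μ s') (π s') := tsum_congr step2
      _ = ∑' s, ∑' s', (π s' * p s' s) * Gter (μ s') (π s') := ENNReal.tsum_comm
      _ ≤ ∑' s, π s * Gter (ν s) (π s) := ENNReal.tsum_le_tsum fun s =>
          col_jensen (π s) (ν s) (hfin s) (hνt s) _ _ _ hμt hfin (hstat s) (htrans s)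
      _ ≤ ∑' s, (Bter (ν s) (π s) + ν s) := ENNReal.tsum_le_tsum fun s =>
          Gter_le_Bter _ _ (hνt s) (hfin s)
      _ = (∑' s, Bter (ν s) (π s)) + 1 := by rw [ENNReal.tsum_add, ν.tsum_coe]
  rw [klDiv_eq, klDiv_eq]
  by_cases hBμ : (∑' s', Bter (μ s') (π s')) = ⊤
  · have hBν : (∑' s, Bter (ν s) (π s)) = ⊤ := by
      rw [hBμ] at hII
      rcases ENNReal.add_eq_top.mp (top_le_iff.mp hII) with h | h
      · exact h
      · exact absurd h ENNReal.one_ne_top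
    rw [hBν, EReal.coe_ennreal_top, EReal.sub_top]
    exact bot_le
  by_cases hBν : (∑' s, Bter (ν s) (π s)) = ⊤
  · rw [hBν, EReal.coe_ennreal_top, EReal.sub_top]
    exact bot_le
  by_cases hAμ : (∑' s', Ater (μ s') (π s')) = ⊤
  · rw [hAμ, EReal.coe_ennreal_top, ecoe_fin _ hBμ, EReal.top_sub_coe]
    exact le_top
  · have hAν : (∑' s, Ater (ν s) (π s)) ≠ ⊤ := by
      intro h
      rw [h, top_add] at hI
      exact (ENNReal.add_ne_top.mpr ⟨hAμ, hBν⟩) (top_le_iff.mp hI)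
    rw [ecoe_fin _ hAν, ecoe_fin _ hBν, ecoe_fin _ hAμ, ecoe_fin _ hBμ,
      ← EReal.coe_sub, ← EReal.coe_sub, EReal.coe_le_coe_iff]
    have h1 := ENNReal.toReal_mono (ENNReal.add_ne_top.mpr ⟨hAμ, hBν⟩) hI
    rw [ENNReal.toReal_add hAν hBμ, ENNReal.toReal_add hAμ hBν] at h1
    linarith
end

section
/- Every m-sided doubly stochastic matrix on a countable set S is a uniform mixture of m bijections: if p is doubly stochastic with all entries multiples of 1/m, then there exist bijections f₁,…,f_m of S such that p(s,s') = (1/m)·#{i : f_i(s) = s'}. -/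
open scoped ENNReal
open Function Set

section Aux

variable {S : Type*}

/-- Schröder–Bernstein along a relation: from an injection picking `R`-successors and an
injection picking `R`-predecessors, build a bijection staying inside `R`. -/
lemma csb_rel (R : S → S → Prop) (f g : S → S) (hf : Function.Injective f)
    (hg : Function.Injective g) (hfR : ∀ s, R s (f s)) (hgR : ∀ t, R (g t) t) :
    ∃ e : Equiv.Perm S, ∀ s, R s (e s) := by
  classical
  cases isEmpty_or_nonempty S with
  | inl h => exact ⟨Equiv.refl S, fun s => (IsEmpty.false s).elim⟩
  | inr h => ?_
  set F : Set S →o Set S :=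
    { toFun := fun s => (g '' (f '' s)ᶜ)ᶜ
      monotone' := fun s t hst =>
        compl_subset_compl.mpr <| image_mono <| compl_subset_compl.mpr <| image_mono hst }
  set s : Set S := F.lfp
  have hs : (g '' (f '' s)ᶜ)ᶜ = s := F.map_lfp
  have hns : g '' (f '' s)ᶜ = sᶜ := compl_injective (by simp [hs])
  set g' := invFun g
  have g'g : LeftInverse g' g := leftInverse_invFun hg
  have hg'ns : g' '' sᶜ = (f '' s)ᶜ := by rw [← hns, g'g.image_image]
  set h : S → S := s.piecewise f g' with hh
  have hsurj : Surjective h := by rw [← range_eq_univ, range_piecewise, hg'ns, union_compl_self]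
  have hinj : Injective h := by
    refine (injective_piecewise_iff _).2 ⟨hf.injOn, ?_, ?_⟩
    · intro x hx y hy hxy
      obtain ⟨x', _, rfl⟩ : x ∈ g '' (f '' s)ᶜ := by rwa [hns]
      obtain ⟨y', _, rfl⟩ : y ∈ g '' (f '' s)ᶜ := by rwa [hns]
      rw [g'g _, g'g _] at hxy
      rw [hxy]
    · intro x hx y hy hxy
      obtain ⟨y', hy', rfl⟩ : y ∈ g '' (f '' s)ᶜ := by rwa [hns]
      rw [g'g _] at hxy
      exact hy' ⟨x, hx, hxy⟩
  refine ⟨Equiv.ofBijective h ⟨hinj, hsurj⟩, fun x => ?_⟩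
  show R x (h x)
  rw [hh]
  by_cases hx : x ∈ s
  · rw [Set.piecewise_eq_of_mem _ _ _ hx]; exact hfR x
  · rw [Set.piecewise_eq_of_notMem _ _ _ hx]
    obtain ⟨y, _, rfl⟩ : x ∈ g '' (f '' s)ᶜ := by rwa [hns]
    rw [g'g y]; exact hgR y

/-- Hall's theorem for one side of an `n`-regular bipartite multigraph with multiplicities `k`. -/
lemma hall_half (n : ℕ) (hn : n ≠ 0) (k : S → S → ℕ)
    (hrow : ∀ s, ∑' s', (k s s' : ℝ≥0∞) = n)
    (hcol : ∀ s', ∑' s, (k s s' : ℝ≥0∞) = n) :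
    ∃ f : S → S, Function.Injective f ∧ ∀ s, k s (f s) ≠ 0 := by
  classical
  have hfin : ∀ s, {s' | k s s' ≠ 0}.Finite := by
    intro s
    have := ENNReal.finite_const_le_of_tsum_ne_top (a := fun s' => (k s s' : ℝ≥0∞))
      (by rw [hrow s]; exact ENNReal.natCast_ne_top n) (ε := 1) one_ne_zero
    refine this.subset fun s' hs' => ?_
    simp only [Set.mem_setOf_eq] at hs' ⊢
    exact_mod_cast Nat.one_le_iff_ne_zero.mpr hs'
  set N : S → Finset S := fun s => (hfin s).toFinset with hN
  have hall : ∀ A : Finset S, A.card ≤ (A.biUnion N).card := by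
    intro A
    set B := A.biUnion N with hB
    have h1 : ∀ s ∈ A, ∑ s' ∈ B, (k s s' : ℝ≥0∞) = n := by
      intro s hs
      rw [← hrow s]
      refine (tsum_eq_sum fun s' hs' => ?_).symm
      have : s' ∉ N s := fun hmem => hs' (Finset.mem_biUnion.mpr ⟨s, hs, hmem⟩)
      rw [hN] at this
      simp only [Set.Finite.mem_toFinset, Set.mem_setOf_eq, not_not] at this
      exact_mod_cast this
    have key : (n : ℝ≥0∞) * A.card ≤ (n : ℝ≥0∞) * B.card := by
      calc (n : ℝ≥0∞) * A.card = ∑ _s ∈ A, (n : ℝ≥0∞) := by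
            rw [Finset.sum_const, nsmul_eq_mul, mul_comm]
        _ = ∑ s ∈ A, ∑ s' ∈ B, (k s s' : ℝ≥0∞) := (Finset.sum_congr rfl h1).symm
        _ = ∑ s' ∈ B, ∑ s ∈ A, (k s s' : ℝ≥0∞) := Finset.sum_comm
        _ ≤ ∑ _s' ∈ B, (n : ℝ≥0∞) := by
            refine Finset.sum_le_sum fun s' _ => ?_
            rw [← hcol s']
            exact ENNReal.sum_le_tsum A
        _ = (n : ℝ≥0∞) * B.card := by rw [Finset.sum_const, nsmul_eq_mul, mul_comm]
    have := (ENNReal.mul_le_mul_iff_right (by exact_mod_cast hn) (ENNReal.natCast_ne_top n)).mp key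
    exact_mod_cast this
  obtain ⟨f, hfinj, hfmem⟩ := (Finset.all_card_le_biUnion_card_iff_exists_injective N).mp hall
  refine ⟨f, hfinj, fun s => ?_⟩
  have := hfmem s
  rw [hN] at this
  simpa using this

/-- An `n`-regular doubly stochastic integer matrix is a sum of `n` permutation matrices. -/
lemma decompose [DecidableEq S] (n : ℕ) : ∀ (k : S → S → ℕ),
    (∀ s, ∑' s', (k s s' : ℝ≥0∞) = n) → (∀ s', ∑' s, (k s s' : ℝ≥0∞) = n) →
    ∃ f : Fin n → Equiv.Perm S, ∀ s s',
      k s s' = ∑ i : Fin n, if f i s = s' then 1 else 0 := by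
  induction n with
  | zero =>
    intro k hrow hcol
    refine ⟨fun i => i.elim0, fun s s' => ?_⟩
    have h0 : ∀ t, k s t = 0 := by simpa using hrow s
    simp [h0]
  | succ n ih =>
    intro k hrow hcol
    classical
    obtain ⟨f, hfinj, hfne⟩ := hall_half (n + 1) (Nat.succ_ne_zero n) k hrow hcol
    obtain ⟨g, hginj, hgne⟩ :=
      hall_half (n + 1) (Nat.succ_ne_zero n) (fun s s' => k s' s) hcol hrow
    obtain ⟨σ, hσ⟩ := csb_rel (fun s s' => k s s' ≠ 0) f g hfinj hginj hfne hgne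
    set k' : S → S → ℕ := fun s s' => k s s' - (if σ s = s' then 1 else 0) with hk'
    have hpoint : ∀ s s', (if σ s = s' then 1 else 0) ≤ k s s' := by
      intro s s'
      split_ifs with h
      · rw [← h]; exact Nat.one_le_iff_ne_zero.mpr (hσ s)
      · exact Nat.zero_le _
    have hsum : ∀ s s', k' s s' + (if σ s = s' then 1 else 0) = k s s' := fun s s' =>
      Nat.sub_add_cancel (hpoint s s')
    have hcast : ∀ s s', (k' s s' : ℝ≥0∞) + (if σ s = s' then 1 else 0) = (k s s' : ℝ≥0∞) := by
      intro s s'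
      have := hsum s s'
      split_ifs with h <;> split_ifs at this <;> exact_mod_cast congrArg (Nat.cast (R := ℝ≥0∞)) this
    have hrow' : ∀ s, ∑' s', (k' s s' : ℝ≥0∞) = n := by
      intro s
      have hone : ∑' s', (if σ s = s' then (1 : ℝ≥0∞) else 0) = 1 := by
        have : (fun s' => if σ s = s' then (1 : ℝ≥0∞) else 0)
            = fun s' => if s' = σ s then (1 : ℝ≥0∞) else 0 := by
          funext s'; exact if_congr eq_comm rfl rfl
        rw [this, tsum_ite_eq]
      have hA : ∑' s', (k' s s' : ℝ≥0∞) + 1 = (n : ℝ≥0∞) + 1 := by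
        conv_lhs => rw [← hone]
        rw [← ENNReal.tsum_add]
        calc ∑' s', ((k' s s' : ℝ≥0∞) + if σ s = s' then 1 else 0)
            = ∑' s', (k s s' : ℝ≥0∞) := tsum_congr fun s' => hcast s s'
          _ = ((n + 1 : ℕ) : ℝ≥0∞) := hrow s
          _ = (n : ℝ≥0∞) + 1 := by push_cast; ring
      exact WithTop.add_right_cancel ENNReal.one_ne_top hA
    have hcol' : ∀ s', ∑' s, (k' s s' : ℝ≥0∞) = n := by
      intro s'
      have hone : ∑' s, (if σ s = s' then (1 : ℝ≥0∞) else 0) = 1 := by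
        have : (fun s => if σ s = s' then (1 : ℝ≥0∞) else 0)
            = fun s => if s = σ.symm s' then (1 : ℝ≥0∞) else 0 := by
          funext s
          exact if_congr (Equiv.eq_symm_apply σ).symm rfl rfl
        rw [this, tsum_ite_eq]
      have hA : ∑' s, (k' s s' : ℝ≥0∞) + 1 = (n : ℝ≥0∞) + 1 := by
        conv_lhs => rw [← hone]
        rw [← ENNReal.tsum_add]
        calc ∑' s, ((k' s s' : ℝ≥0∞) + if σ s = s' then 1 else 0)
            = ∑' s, (k s s' : ℝ≥0∞) := tsum_congr fun s => hcast s s'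
          _ = ((n + 1 : ℕ) : ℝ≥0∞) := hcol s'
          _ = (n : ℝ≥0∞) + 1 := by push_cast; ring
      exact WithTop.add_right_cancel ENNReal.one_ne_top hA
    obtain ⟨F, hF⟩ := ih k' hrow' hcol'
    refine ⟨Fin.cons σ F, fun s s' => ?_⟩
    rw [Fin.sum_univ_succ]
    simp only [Fin.cons_zero, Fin.cons_succ]
    rw [← hF s s', ← hsum s s', Nat.add_comm]

end Aux

/-- Every `m`-sided doubly stochastic matrix on a countable set `S` is a uniform mixture of
`m` bijections: if `p` is doubly stochastic with all entries multiples of `1/m`, then there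
are bijections `f 0, …, f (m−1)` of `S` with `p(s,s') = #{i | f i s = s'} / m`. -/
theorem m_sided_doubly_stochastic_mixture_of_bijections {S : Type*} [Countable S]
    (m : ℕ) (hm : 0 < m) (p : S → S → ℝ≥0∞)
    (hrow : ∀ s, ∑' s', p s s' = 1) (hcol : ∀ s', ∑' s, p s s' = 1)
    (hside : ∀ s s', ∃ k : ℕ, p s s' = (k : ℝ≥0∞) / (m : ℝ≥0∞)) :
    ∃ f : Fin m → Equiv.Perm S, ∀ s s',
      p s s' = (Nat.card {i : Fin m // f i s = s'} : ℝ≥0∞) / (m : ℝ≥0∞) := by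
  classical
  choose k hk using hside
  have hm0 : (m : ℝ≥0∞) ≠ 0 := by exact_mod_cast hm.ne'
  have hmt : (m : ℝ≥0∞) ≠ ∞ := ENNReal.natCast_ne_top m
  have hrow' : ∀ s, ∑' s', (k s s' : ℝ≥0∞) = m := by
    intro s
    refine (ENNReal.div_eq_one_iff hm0 hmt).mp ?_
    rw [div_eq_mul_inv, ← ENNReal.tsum_mul_right, ← hrow s]
    exact tsum_congr fun s' => by rw [hk s s', div_eq_mul_inv]
  have hcol' : ∀ s', ∑' s, (k s s' : ℝ≥0∞) = m := by
    intro s'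
    refine (ENNReal.div_eq_one_iff hm0 hmt).mp ?_
    rw [div_eq_mul_inv, ← ENNReal.tsum_mul_right, ← hcol s']
    exact tsum_congr fun s => by rw [hk s s', div_eq_mul_inv]
  obtain ⟨f, hf⟩ := decompose m k hrow' hcol'
  refine ⟨f, fun s s' => ?_⟩
  rw [hk s s', hf s s']
  suffices h : (∑ i : Fin m, if f i s = s' then 1 else 0) = Nat.card {i : Fin m // f i s = s'} by
    rw [h]
  rw [Nat.card_eq_fintype_card, Fintype.card_subtype, Finset.card_filter]
end
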